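/- Let A be an associative algebra over a field k of characteristic zero with a locally nilpotent derivation ∂. Then the free k[D]-module H ⊗ A with products a ∘_n b = a·∂^n(b) (for a, b ∈ A, extended by sesquilinearity) satisfies the conformal associativity identity (a ∘_n b) ∘_m c = Σ_{s≥0} (-1)^s C(n,s) a ∘_{n-s} (b ∘_{m+s} c) for all n, m ≥ 0. -/

import Mathlib

open Polynomial Finset

noncomputable section

variable (k : Type*) [Field k] [CharZero k]
variable (A : Type*) [Ring A] [Algebra k A]

/-- The conformal product on `H ⊗ A ≅ A[D]` (elements written as polynomials
in `D` with coefficients in `A`): determined on `A` by `a ∘_n b = a·∂^n(b)`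
and extended by the sesquilinearity axioms
`(Da) ∘_n b = -n (a ∘_{n-1} b)` and `a ∘_n (Db) = D(a ∘_n b) + n (a ∘_{n-1} b)`;
explicitly,
`(Σ_s D^s a_s) ∘_n (Σ_t D^t b_t)
  = Σ_{s,t,j} (-1)^s C(t,j)·(n)_{s+j} · D^{t-j} (a_s·∂^{n-s-j} b_t)`
where `(n)_r = n!/(n-r)!` is the descending factorial. -/
def nmulD (d : A →ₗ[k] A) (x y : Polynomial A) (n : ℕ) : Polynomial A :=
  ∑ s ∈ Finset.range (x.natDegree + 1), ∑ t ∈ Finset.range (y.natDegree + 1),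
    ∑ j ∈ Finset.range (t + 1),
      if s + j ≤ n then
        (((-1 : ℤ) ^ s * (t.choose j : ℤ) * (n.descFactorial (s + j) : ℤ)) •
          ((Polynomial.X : Polynomial A) ^ (t - j) *
            Polynomial.C (x.coeff s * (⇑d)^[n - s - j] (y.coeff t))))
      else 0


set_option linter.unusedSectionVars false
set_option maxHeartbeats 1000000

def tA (d : A →ₗ[k] A) (n s t : ℕ) (a b : A) : Polynomial A :=
  ∑ j ∈ Finset.range (t + 1),
    (((-1 : ℤ) ^ s * (t.choose j : ℤ) * (n.descFactorial (s + j) : ℤ)) •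
      ((Polynomial.X : Polynomial A) ^ (t - j) * Polynomial.C (a * (⇑d)^[n - s - j] b)))

variable {k A}


lemma iter_d (d : A →ₗ[k] A) (n : ℕ) (x : A) : (⇑d)^[n] x = (d ^ n) x :=
  (Module.End.pow_apply d n x).symm

lemma tA_zero_left (d : A →ₗ[k] A) (n s t : ℕ) (b : A) : tA k A d n s t 0 b = 0 := by
  simp [tA]

lemma tA_zero_right (d : A →ₗ[k] A) (n s t : ℕ) (a : A) : tA k A d n s t a 0 = 0 := by
  simp [tA, iter_d]

lemma tA_add_left (d : A →ₗ[k] A) (n s t : ℕ) (a₁ a₂ b : A) :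
    tA k A d n s t (a₁ + a₂) b = tA k A d n s t a₁ b + tA k A d n s t a₂ b := by
  simp [tA, add_mul, mul_add, smul_add, Finset.sum_add_distrib]

lemma tA_add_right (d : A →ₗ[k] A) (n s t : ℕ) (a b₁ b₂ : A) :
    tA k A d n s t a (b₁ + b₂) = tA k A d n s t a b₁ + tA k A d n s t a b₂ := by
  simp [tA, iter_d, map_add, mul_add, smul_add, Finset.sum_add_distrib]

lemma tA_smul_left (d : A →ₗ[k] A) (n s t : ℕ) (c : ℤ) (a b : A) :
    tA k A d n s t (c • a) b = c • tA k A d n s t a b := by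
  unfold tA
  rw [Finset.smul_sum]
  refine Finset.sum_congr rfl fun j _ => ?_
  rw [smul_mul_assoc, ← Polynomial.smul_C, mul_smul_comm, smul_comm]

lemma tA_smul_right (d : A →ₗ[k] A) (n s t : ℕ) (c : ℤ) (a b : A) :
    tA k A d n s t a (c • b) = c • tA k A d n s t a b := by
  unfold tA
  rw [Finset.smul_sum]
  refine Finset.sum_congr rfl fun j _ => ?_
  rw [iter_d, map_zsmul, ← iter_d, mul_smul_comm, ← Polynomial.smul_C, mul_smul_comm, smul_comm]

lemma descFact_succ' (n j : ℕ) : n.descFactorial (j + 1) = n * (n - 1).descFactorial j := by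
  cases n with
  | zero => simp
  | succ n' => rw [Nat.succ_descFactorial_succ]; rfl

lemma tA_succ_left (d : A →ₗ[k] A) (n s t : ℕ) (a b : A) :
    tA k A d n (s + 1) t a b = (-(n : ℤ)) • tA k A d (n - 1) s t a b := by
  unfold tA
  rw [Finset.smul_sum]
  refine Finset.sum_congr rfl fun j _ => ?_
  have he : n - (s + 1) - j = n - 1 - s - j := by omega
  have hd : (n.descFactorial (s + 1 + j) : ℤ) = (n : ℤ) * ((n - 1).descFactorial (s + j) : ℤ) := by
    rw [show s + 1 + j = (s + j) + 1 by omega, descFact_succ' n (s + j)]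
    push_cast
    ring
  rw [he, hd, smul_smul]
  congr 1
  ring

lemma tA_succ_right (d : A →ₗ[k] A) (n s t : ℕ) (a b : A) :
    tA k A d n s (t + 1) a b =
      Polynomial.X * tA k A d n s t a b + (n : ℤ) • tA k A d (n - 1) s t a b := by
  have hg : Polynomial.X * tA k A d n s t a b =
      ∑ j ∈ Finset.range (t + 1),
        (((-1 : ℤ) ^ s * (t.choose j : ℤ) * (n.descFactorial (s + j) : ℤ)) •
          ((Polynomial.X : Polynomial A) ^ (t - j + 1) *
            Polynomial.C (a * (⇑d)^[n - s - j] b))) := by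
    unfold tA
    rw [Finset.mul_sum]
    refine Finset.sum_congr rfl fun j _ => ?_
    rw [mul_smul_comm, ← mul_assoc, ← pow_succ']
  have hh : (n : ℤ) • tA k A d (n - 1) s t a b =
      ∑ j ∈ Finset.range (t + 1),
        (((-1 : ℤ) ^ s * (t.choose j : ℤ) * ((n : ℤ) * ((n - 1).descFactorial (s + j) : ℤ))) •
          ((Polynomial.X : Polynomial A) ^ (t - j) *
            Polynomial.C (a * (⇑d)^[n - s - (j + 1)] b))) := by
    unfold tA
    rw [Finset.smul_sum]
    refine Finset.sum_congr rfl fun j _ => ?_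
    rw [show n - 1 - s - j = n - s - (j + 1) by omega, smul_smul]
    congr 1
    ring
  rw [hg, hh]
  unfold tA
  rw [Finset.sum_range_succ' _ (t + 1)]
  rw [Finset.sum_range_succ'
    (fun j => (((-1 : ℤ) ^ s * (t.choose j : ℤ) * (n.descFactorial (s + j) : ℤ)) •
      ((Polynomial.X : Polynomial A) ^ (t - j + 1) * Polynomial.C (a * (⇑d)^[n - s - j] b)))) t]
  have hsplit : ∀ j ∈ Finset.range (t + 1),
      (((-1 : ℤ) ^ s * ((t + 1).choose (j + 1) : ℤ) * (n.descFactorial (s + (j + 1)) : ℤ)) •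
        ((Polynomial.X : Polynomial A) ^ (t + 1 - (j + 1)) *
          Polynomial.C (a * (⇑d)^[n - s - (j + 1)] b))) =
      (((-1 : ℤ) ^ s * (t.choose (j + 1) : ℤ) * (n.descFactorial (s + (j + 1)) : ℤ)) •
        ((Polynomial.X : Polynomial A) ^ (t - (j + 1) + 1) *
          Polynomial.C (a * (⇑d)^[n - s - (j + 1)] b))) +
      (((-1 : ℤ) ^ s * (t.choose j : ℤ) * ((n : ℤ) * ((n - 1).descFactorial (s + j) : ℤ))) •
        ((Polynomial.X : Polynomial A) ^ (t - j) *
          Polynomial.C (a * (⇑d)^[n - s - (j + 1)] b))) := by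
    intro j hj
    rw [Finset.mem_range] at hj
    have hd : (n.descFactorial (s + (j + 1)) : ℤ)
        = (n : ℤ) * ((n - 1).descFactorial (s + j) : ℤ) := by
      rw [show s + (j + 1) = (s + j) + 1 by omega, descFact_succ' n (s + j)]
      push_cast; ring
    have hch : ((t + 1).choose (j + 1) : ℤ) = (t.choose (j + 1) : ℤ) + (t.choose j : ℤ) := by
      rw [Nat.choose_succ_succ]; push_cast; ring
    rcases Nat.lt_or_ge j t with hlt | hge
    · rw [show t + 1 - (j + 1) = t - j by omega, show t - (j + 1) + 1 = t - j by omega,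
        ← add_smul]
      congr 1
      rw [hch, hd]
      ring
    · have hjt : j = t := by omega
      subst hjt
      rw [hd]
      simp [Nat.choose_self, Nat.choose_succ_self, Nat.sub_self]
  rw [Finset.sum_congr rfl hsplit, Finset.sum_add_distrib]
  have hzero : (((-1 : ℤ) ^ s * (t.choose (t + 1) : ℤ) * (n.descFactorial (s + (t + 1)) : ℤ)) •
      ((Polynomial.X : Polynomial A) ^ (t - (t + 1) + 1) *
        Polynomial.C (a * (⇑d)^[n - s - (t + 1)] b))) = 0 := by
    rw [Nat.choose_eq_zero_of_lt (by omega)]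
    simp
  rw [Finset.sum_range_succ
    (fun j => (((-1 : ℤ) ^ s * (t.choose (j + 1) : ℤ) * (n.descFactorial (s + (j + 1)) : ℤ)) •
      ((Polynomial.X : Polynomial A) ^ (t - (j + 1) + 1) *
        Polynomial.C (a * (⇑d)^[n - s - (j + 1)] b)))) t]
  simp only [hzero, add_zero]
  simp only [Nat.sub_zero, Nat.add_zero, Nat.choose_zero_right]
  abel

def nmulD' (d : A →ₗ[k] A) (x y : Polynomial A) (n : ℕ) : Polynomial A :=
  ∑ s ∈ Finset.range (x.natDegree + 1), ∑ t ∈ Finset.range (y.natDegree + 1),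
    ∑ j ∈ Finset.range (t + 1),
      if s + j ≤ n then
        (((-1 : ℤ) ^ s * (t.choose j : ℤ) * (n.descFactorial (s + j) : ℤ)) •
          ((Polynomial.X : Polynomial A) ^ (t - j) *
            Polynomial.C (x.coeff s * (⇑d)^[n - s - j] (y.coeff t))))
      else 0

lemma natDegree_zsmul_le (c : ℤ) (x : Polynomial A) : (c • x).natDegree ≤ x.natDegree := by
  rw [Polynomial.natDegree_le_iff_coeff_eq_zero]
  intro N h
  rw [Polynomial.coeff_smul, Polynomial.coeff_eq_zero_of_natDegree_lt h, smul_zero]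

lemma nmulD_eq (d : A →ₗ[k] A) (x y : Polynomial A) (n N M : ℕ)
    (hN : x.natDegree < N) (hM : y.natDegree < M) :
    nmulD' d x y n =
      ∑ s ∈ Finset.range N, ∑ t ∈ Finset.range M, tA k A d n s t (x.coeff s) (y.coeff t) := by
  have hdef : nmulD' d x y n = ∑ s ∈ Finset.range (x.natDegree + 1),
      ∑ t ∈ Finset.range (y.natDegree + 1), tA k A d n s t (x.coeff s) (y.coeff t) := by
    unfold nmulD' tA
    refine Finset.sum_congr rfl fun s _ => Finset.sum_congr rfl fun t _ =>
      Finset.sum_congr rfl fun j _ => ?_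
    split_ifs with h
    · rfl
    · have hz : (n.descFactorial (s + j) : ℤ) = 0 := by
        rw [Nat.descFactorial_eq_zero_iff_lt.2 (by omega)]; rfl
      rw [hz, mul_zero, zero_smul]
  rw [hdef]
  have hinner : ∀ s : ℕ,
      ∑ t ∈ Finset.range (y.natDegree + 1), tA k A d n s t (x.coeff s) (y.coeff t)
        = ∑ t ∈ Finset.range M, tA k A d n s t (x.coeff s) (y.coeff t) := by
    intro s
    refine Finset.sum_subset (Finset.range_subset_range.2 hM) fun t _ ht => ?_
    rw [Finset.mem_range] at ht
    rw [(Polynomial.coeff_eq_zero_of_natDegree_lt (show y.natDegree < t by omega) :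
      y.coeff t = 0), tA_zero_right]
  simp only [hinner]
  refine Finset.sum_subset (Finset.range_subset_range.2 hN) fun s _ hs => ?_
  rw [Finset.mem_range] at hs
  rw [Polynomial.coeff_eq_zero_of_natDegree_lt (by omega)]
  exact Finset.sum_eq_zero fun t _ => tA_zero_left d n s t _

lemma nmulD_add_left (d : A →ₗ[k] A) (x₁ x₂ y : Polynomial A) (n : ℕ) :
    nmulD' d (x₁ + x₂) y n = nmulD' d x₁ y n + nmulD' d x₂ y n := by
  set N := max x₁.natDegree x₂.natDegree + 1 with hNdef
  have h0 : (x₁ + x₂).natDegree < N := by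
    have := Polynomial.natDegree_add_le x₁ x₂; omega
  rw [nmulD_eq d (x₁ + x₂) y n N (y.natDegree + 1) h0 (by omega),
      nmulD_eq d x₁ y n N (y.natDegree + 1) (by omega) (by omega),
      nmulD_eq d x₂ y n N (y.natDegree + 1) (by omega) (by omega),
      ← Finset.sum_add_distrib]
  refine Finset.sum_congr rfl fun s _ => ?_
  rw [← Finset.sum_add_distrib]
  refine Finset.sum_congr rfl fun t _ => ?_
  rw [Polynomial.coeff_add, tA_add_left]

lemma nmulD_add_right (d : A →ₗ[k] A) (x y₁ y₂ : Polynomial A) (n : ℕ) :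
    nmulD' d x (y₁ + y₂) n = nmulD' d x y₁ n + nmulD' d x y₂ n := by
  set M := max y₁.natDegree y₂.natDegree + 1 with hMdef
  have h0 : (y₁ + y₂).natDegree < M := by
    have := Polynomial.natDegree_add_le y₁ y₂; omega
  rw [nmulD_eq d x (y₁ + y₂) n (x.natDegree + 1) M (by omega) h0,
      nmulD_eq d x y₁ n (x.natDegree + 1) M (by omega) (by omega),
      nmulD_eq d x y₂ n (x.natDegree + 1) M (by omega) (by omega),
      ← Finset.sum_add_distrib]
  refine Finset.sum_congr rfl fun s _ => ?_
  rw [← Finset.sum_add_distrib]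
  refine Finset.sum_congr rfl fun t _ => ?_
  rw [Polynomial.coeff_add, tA_add_right]

lemma nmulD_smul_left (d : A →ₗ[k] A) (c : ℤ) (x y : Polynomial A) (n : ℕ) :
    nmulD' d (c • x) y n = c • nmulD' d x y n := by
  have h0 : (c • x).natDegree < x.natDegree + 1 := by
    have := natDegree_zsmul_le c x; omega
  rw [nmulD_eq d (c • x) y n (x.natDegree + 1) (y.natDegree + 1) h0 (by omega),
      nmulD_eq d x y n (x.natDegree + 1) (y.natDegree + 1) (by omega) (by omega),
      Finset.smul_sum]
  refine Finset.sum_congr rfl fun s _ => ?_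
  rw [Finset.smul_sum]
  refine Finset.sum_congr rfl fun t _ => ?_
  rw [Polynomial.coeff_smul]
  exact tA_smul_left d n s t c _ _

lemma nmulD_smul_right (d : A →ₗ[k] A) (c : ℤ) (x y : Polynomial A) (n : ℕ) :
    nmulD' d x (c • y) n = c • nmulD' d x y n := by
  have h0 : (c • y).natDegree < y.natDegree + 1 := by
    have := natDegree_zsmul_le c y; omega
  rw [nmulD_eq d x (c • y) n (x.natDegree + 1) (y.natDegree + 1) (by omega) h0,
      nmulD_eq d x y n (x.natDegree + 1) (y.natDegree + 1) (by omega) (by omega),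
      Finset.smul_sum]
  refine Finset.sum_congr rfl fun s _ => ?_
  rw [Finset.smul_sum]
  refine Finset.sum_congr rfl fun t _ => ?_
  rw [Polynomial.coeff_smul]
  exact tA_smul_right d n s t c _ _

lemma nmulD_X_mul_left (d : A →ₗ[k] A) (x y : Polynomial A) (n : ℕ) :
    nmulD' d (Polynomial.X * x) y n = (-(n : ℤ)) • nmulD' d x y (n - 1) := by
  have h0 : (Polynomial.X * x).natDegree < x.natDegree + 2 := by
    have := Polynomial.natDegree_mul_le (p := (Polynomial.X : Polynomial A)) (q := x)
    have hX : (Polynomial.X : Polynomial A).natDegree ≤ 1 := Polynomial.natDegree_X_le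
    omega
  rw [nmulD_eq d (Polynomial.X * x) y n (x.natDegree + 2) (y.natDegree + 1) h0 (by omega),
      nmulD_eq d x y (n - 1) (x.natDegree + 1) (y.natDegree + 1) (by omega) (by omega),
      Finset.sum_range_succ']
  have hc0 : (Polynomial.X * x).coeff 0 = 0 := by
    simp [Polynomial.mul_coeff_zero]
  rw [hc0]
  simp only [tA_zero_left, Finset.sum_const_zero, add_zero]
  rw [Finset.smul_sum]
  refine Finset.sum_congr rfl fun s _ => ?_
  rw [Finset.smul_sum]
  refine Finset.sum_congr rfl fun t _ => ?_
  rw [Polynomial.coeff_X_mul, tA_succ_left]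

lemma nmulD_X_mul_right (d : A →ₗ[k] A) (x y : Polynomial A) (n : ℕ) :
    nmulD' d x (Polynomial.X * y) n =
      Polynomial.X * nmulD' d x y n + (n : ℤ) • nmulD' d x y (n - 1) := by
  have h0 : (Polynomial.X * y).natDegree < y.natDegree + 2 := by
    have := Polynomial.natDegree_mul_le (p := (Polynomial.X : Polynomial A)) (q := y)
    have hX : (Polynomial.X : Polynomial A).natDegree ≤ 1 := Polynomial.natDegree_X_le
    omega
  rw [nmulD_eq d x (Polynomial.X * y) n (x.natDegree + 1) (y.natDegree + 2) (by omega) h0,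
      nmulD_eq d x y n (x.natDegree + 1) (y.natDegree + 1) (by omega) (by omega),
      nmulD_eq d x y (n - 1) (x.natDegree + 1) (y.natDegree + 1) (by omega) (by omega),
      Finset.mul_sum, Finset.smul_sum, ← Finset.sum_add_distrib]
  refine Finset.sum_congr rfl fun s _ => ?_
  rw [Finset.sum_range_succ']
  have hc0 : (Polynomial.X * y).coeff 0 = 0 := by
    simp [Polynomial.mul_coeff_zero]
  rw [hc0, tA_zero_right, add_zero, Finset.mul_sum, Finset.smul_sum, ← Finset.sum_add_distrib]
  refine Finset.sum_congr rfl fun t _ => ?_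
  rw [Polynomial.coeff_X_mul, tA_succ_right]

lemma nmulD_C_C (d : A →ₗ[k] A) (a b : A) (n : ℕ) :
    nmulD' d (Polynomial.C a) (Polynomial.C b) n = Polynomial.C (a * (⇑d)^[n] b) := by
  rw [nmulD_eq d _ _ n 1 1 (by simp [Polynomial.natDegree_C]) (by simp [Polynomial.natDegree_C])]
  simp [tA]

lemma leib_iter (d : A →ₗ[k] A) (hleib : ∀ a b : A, d (a * b) = d a * b + a * d b) :
    ∀ (N : ℕ) (b c : A),
      (⇑d)^[N] (b * c) = ∑ u ∈ Finset.range (N + 1),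
        (N.choose u) • ((⇑d)^[u] b * (⇑d)^[N - u] c) := by
  intro N
  induction N with
  | zero => intro b c; simp
  | succ N ih =>
    intro b c
    rw [Function.iterate_succ_apply', ih, map_sum]
    have hterm : ∀ u ∈ Finset.range (N + 1),
        d ((N.choose u) • ((⇑d)^[u] b * (⇑d)^[N - u] c)) =
          (N.choose u) • ((⇑d)^[u + 1] b * (⇑d)^[N - u] c) +
          (N.choose u) • ((⇑d)^[u] b * (⇑d)^[(N - u) + 1] c) := by
      intro u _
      rw [map_nsmul, hleib, ← Function.iterate_succ_apply' d u b,
        ← Function.iterate_succ_apply' d (N - u) c, smul_add]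
    rw [Finset.sum_congr rfl hterm, Finset.sum_add_distrib]
    rw [Finset.sum_range_succ' (fun u => ((N + 1).choose u) •
      ((⇑d)^[u] b * (⇑d)^[N + 1 - u] c)) (N + 1)]
    have hsplit : ∀ u ∈ Finset.range (N + 1),
        ((N + 1).choose (u + 1)) • ((⇑d)^[u + 1] b * (⇑d)^[N + 1 - (u + 1)] c) =
        (N.choose u) • ((⇑d)^[u + 1] b * (⇑d)^[N - u] c) +
        (N.choose (u + 1)) • ((⇑d)^[u + 1] b * (⇑d)^[N - u] c) := by
      intro u _
      rw [show N + 1 - (u + 1) = N - u by omega, Nat.choose_succ_succ, add_nsmul]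
    rw [Finset.sum_congr rfl hsplit, Finset.sum_add_distrib]
    have h2 : ∑ u ∈ Finset.range (N + 1),
        (N.choose (u + 1)) • ((⇑d)^[u + 1] b * (⇑d)^[N - u] c) + ((N + 1).choose 0) •
          ((⇑d)^[0] b * (⇑d)^[N + 1 - 0] c) =
        ∑ u ∈ Finset.range (N + 1), (N.choose u) • ((⇑d)^[u] b * (⇑d)^[(N - u) + 1] c) := by
      rw [Finset.sum_range_succ (fun u => (N.choose (u + 1)) •
        ((⇑d)^[u + 1] b * (⇑d)^[N - u] c)) N]
      rw [Nat.choose_succ_self, zero_smul, add_zero]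
      rw [Finset.sum_range_succ' (fun u => (N.choose u) •
        ((⇑d)^[u] b * (⇑d)^[(N - u) + 1] c)) N]
      congr 1
      · refine Finset.sum_congr rfl fun u hu => ?_
        rw [Finset.mem_range] at hu
        rw [show N - (u + 1) + 1 = N - u by omega]
      · simp
    rw [← h2]
    abel

lemma trinom (n s u : ℕ) :
    n.choose s * (n - s).choose u = n.choose u * (n - u).choose s := by
  rcases le_or_gt (s + u) n with h | h
  · have h1 := Nat.choose_mul (n := n) (k := s + u) (show s ≤ s + u by omega)
    have h2 := Nat.choose_mul (n := n) (k := s + u) (show u ≤ s + u by omega)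
    rw [show s + u - s = u by omega] at h1
    rw [show s + u - u = s by omega] at h2
    have h3 : (s + u).choose s = (s + u).choose u := Nat.choose_symm_add
    rw [← h1, ← h2, h3]
  · rcases le_or_gt s n with h2 | h2
    · have e1 : (n - s).choose u = 0 := Nat.choose_eq_zero_of_lt (by omega)
      rcases le_or_gt u n with h3 | h3
      · have e2 : (n - u).choose s = 0 := Nat.choose_eq_zero_of_lt (by omega)
        rw [e1, e2, mul_zero, mul_zero]
      · have e2 : n.choose u = 0 := Nat.choose_eq_zero_of_lt h3
        rw [e1, e2, mul_zero, zero_mul]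
    · have e1 : n.choose s = 0 := Nat.choose_eq_zero_of_lt h2
      have e2 : (n - u).choose s = 0 := Nat.choose_eq_zero_of_lt (by omega)
      rw [e1, e2, zero_mul, mul_zero]

lemma alt_sum (n u : ℕ) :
    ∑ s ∈ Finset.range (n + 1), ((-1 : ℤ) ^ s * (n.choose s : ℤ) * ((n - s).choose u : ℤ)) =
      if u = n then 1 else 0 := by
  have htr : ∀ s : ℕ, ((-1 : ℤ) ^ s * (n.choose s : ℤ) * ((n - s).choose u : ℤ)) =
      (n.choose u : ℤ) * ((-1 : ℤ) ^ s * ((n - u).choose s : ℤ)) := by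
    intro s
    have := trinom n s u
    have hc : (n.choose s : ℤ) * ((n - s).choose u : ℤ) =
        (n.choose u : ℤ) * ((n - u).choose s : ℤ) := by exact_mod_cast congrArg (Nat.cast : ℕ → ℤ) this
    calc ((-1 : ℤ) ^ s * (n.choose s : ℤ) * ((n - s).choose u : ℤ))
        = (-1 : ℤ) ^ s * ((n.choose s : ℤ) * ((n - s).choose u : ℤ)) := by ring
      _ = (-1 : ℤ) ^ s * ((n.choose u : ℤ) * ((n - u).choose s : ℤ)) := by rw [hc]
      _ = (n.choose u : ℤ) * ((-1 : ℤ) ^ s * ((n - u).choose s : ℤ)) := by ring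
  simp only [htr]
  rw [← Finset.mul_sum]
  have hshrink : ∑ s ∈ Finset.range (n + 1), ((-1 : ℤ) ^ s * ((n - u).choose s : ℤ)) =
      ∑ s ∈ Finset.range (n - u + 1), ((-1 : ℤ) ^ s * ((n - u).choose s : ℤ)) := by
    refine (Finset.sum_subset (Finset.range_subset_range.2 (by omega)) fun s _ hs => ?_).symm
    rw [Finset.mem_range] at hs
    rw [Nat.choose_eq_zero_of_lt (by omega)]
    simp
  rw [hshrink, Int.alternating_sum_range_choose]
  rcases lt_trichotomy u n with h | h | h
  · rw [if_neg (by omega), if_neg (by omega), mul_zero]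
  · subst h
    rw [if_pos (by omega), if_pos rfl, Nat.choose_self]
    norm_num
  · rw [if_pos (by omega), if_neg (by omega), Nat.choose_eq_zero_of_lt h]
    norm_num

lemma CA_base (d : A →ₗ[k] A) (hleib : ∀ a b : A, d (a * b) = d a * b + a * d b)
    (a b c : A) (n m : ℕ) :
    nmulD' d (nmulD' d (Polynomial.C a) (Polynomial.C b) n) (Polynomial.C c) m =
      ∑ s ∈ Finset.range (n + 1),
        (((-1 : ℤ) ^ s * (n.choose s : ℤ)) •
          nmulD' d (Polynomial.C a) (nmulD' d (Polynomial.C b) (Polynomial.C c) (m + s)) (n - s)) := by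
  rw [nmulD_C_C, nmulD_C_C]
  have hterm : ∀ s ∈ Finset.range (n + 1),
      (((-1 : ℤ) ^ s * (n.choose s : ℤ)) •
        nmulD' d (Polynomial.C a) (nmulD' d (Polynomial.C b) (Polynomial.C c) (m + s)) (n - s)) =
      ∑ u ∈ Finset.range (n + 1),
        (((-1 : ℤ) ^ s * (n.choose s : ℤ) * ((n - s).choose u : ℤ)) •
          Polynomial.C (a * ((⇑d)^[u] b * (⇑d)^[n + m - u] c))) := by
    intro s hs
    rw [Finset.mem_range] at hs
    rw [nmulD_C_C, nmulD_C_C, leib_iter d hleib (n - s) b _]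
    have hrw : ∀ u ∈ Finset.range (n - s + 1),
        ((n - s).choose u) • ((⇑d)^[u] b * (⇑d)^[n - s - u] ((⇑d)^[m + s] c)) =
        ((n - s).choose u) • ((⇑d)^[u] b * (⇑d)^[n + m - u] c) := by
      intro u hu
      rw [Finset.mem_range] at hu
      rw [← Function.iterate_add_apply, show n - s - u + (m + s) = n + m - u by omega]
    rw [Finset.sum_congr rfl hrw, Finset.mul_sum, map_sum, Finset.smul_sum]
    have hterm2 : ∀ u ∈ Finset.range (n - s + 1),
        ((-1 : ℤ) ^ s * (n.choose s : ℤ)) •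
          Polynomial.C (a * (((n - s).choose u) • ((⇑d)^[u] b * (⇑d)^[n + m - u] c))) =
        (((-1 : ℤ) ^ s * (n.choose s : ℤ) * ((n - s).choose u : ℤ)) •
          Polynomial.C (a * ((⇑d)^[u] b * (⇑d)^[n + m - u] c))) := by
      intro u _
      rw [mul_smul_comm, map_nsmul, ← natCast_zsmul, smul_smul]
    rw [Finset.sum_congr rfl hterm2]
    refine Finset.sum_subset (Finset.range_subset_range.2 (by omega)) fun u _ hu => ?_
    rw [Finset.mem_range] at hu
    rw [Nat.choose_eq_zero_of_lt (show n - s < u by omega)]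
    push_cast
    rw [mul_zero, zero_smul]
  rw [Finset.sum_congr rfl hterm, Finset.sum_comm]
  have hu : ∀ u ∈ Finset.range (n + 1),
      ∑ s ∈ Finset.range (n + 1),
        (((-1 : ℤ) ^ s * (n.choose s : ℤ) * ((n - s).choose u : ℤ)) •
          Polynomial.C (a * ((⇑d)^[u] b * (⇑d)^[n + m - u] c))) =
      if u = n then Polynomial.C (a * ((⇑d)^[u] b * (⇑d)^[n + m - u] c)) else 0 := by
    intro u _
    rw [← Finset.sum_smul, alt_sum]
    split_ifs with h
    · rw [one_smul]
    · rw [zero_smul]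
  rw [Finset.sum_congr rfl hu, Finset.sum_ite_eq' (Finset.range (n + 1)) n]
  rw [if_pos (Finset.self_mem_range_succ n), show n + m - n = m by omega, mul_assoc]

lemma CA_z_step (d : A →ₗ[k] A) (x y Z : Polynomial A)
    (hIH : ∀ n m : ℕ, nmulD' d (nmulD' d x y n) Z m =
      ∑ s ∈ Finset.range (n + 1), (((-1 : ℤ) ^ s * (n.choose s : ℤ)) •
        nmulD' d x (nmulD' d y Z (m + s)) (n - s))) (n m : ℕ) :
    nmulD' d (nmulD' d x y n) (Polynomial.X * Z) m =
      ∑ s ∈ Finset.range (n + 1), (((-1 : ℤ) ^ s * (n.choose s : ℤ)) •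
        nmulD' d x (nmulD' d y (Polynomial.X * Z) (m + s)) (n - s)) := by
  rw [nmulD_X_mul_right, hIH n m, hIH n (m - 1)]
  have h1 : ∀ s ∈ Finset.range (n + 1),
      (((-1 : ℤ) ^ s * (n.choose s : ℤ)) •
        nmulD' d x (nmulD' d y (Polynomial.X * Z) (m + s)) (n - s)) =
      (Polynomial.X * (((-1 : ℤ) ^ s * (n.choose s : ℤ)) •
          nmulD' d x (nmulD' d y Z (m + s)) (n - s)) +
        (((-1 : ℤ) ^ s * (n.choose s : ℤ)) * ((n - s : ℕ) : ℤ)) •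
          nmulD' d x (nmulD' d y Z (m + s)) (n - s - 1)) +
      ((((-1 : ℤ) ^ s * (n.choose s : ℤ)) * (m : ℤ)) •
          nmulD' d x (nmulD' d y Z (m - 1 + s)) (n - s) +
        (((-1 : ℤ) ^ s * (n.choose s : ℤ)) * (s : ℤ)) •
          nmulD' d x (nmulD' d y Z (m + s - 1)) (n - s)) := by
    intro s _
    rw [nmulD_X_mul_right d y Z (m + s), nmulD_add_right, nmulD_smul_right,
      nmulD_X_mul_right, smul_add, smul_add, mul_smul_comm, smul_smul, smul_smul]
    congr 1
    have hcast : ((m + s : ℕ) : ℤ) = (m : ℤ) + (s : ℤ) := by push_cast; ring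
    rw [hcast, mul_add, add_smul]
    refine congrArg (· + _) ?_
    rcases Nat.eq_zero_or_pos m with hm | hm
    · subst hm
      norm_num
    · rw [show m + s - 1 = m - 1 + s by omega]
  rw [Finset.sum_congr rfl h1, Finset.sum_add_distrib, Finset.sum_add_distrib,
    Finset.sum_add_distrib, ← Finset.mul_sum]
  have e2 : ∑ s ∈ Finset.range (n + 1),
      ((((-1 : ℤ) ^ s * (n.choose s : ℤ)) * (m : ℤ)) •
        nmulD' d x (nmulD' d y Z (m - 1 + s)) (n - s)) =
      (m : ℤ) • ∑ s ∈ Finset.range (n + 1),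
        (((-1 : ℤ) ^ s * (n.choose s : ℤ)) • nmulD' d x (nmulD' d y Z (m - 1 + s)) (n - s)) := by
    rw [Finset.smul_sum]
    refine Finset.sum_congr rfl fun s _ => ?_
    rw [smul_smul]
    congr 1
    ring
  have e3 : ∑ s ∈ Finset.range (n + 1),
      ((((-1 : ℤ) ^ s * (n.choose s : ℤ)) * ((n - s : ℕ) : ℤ)) •
        nmulD' d x (nmulD' d y Z (m + s)) (n - s - 1)) +
      ∑ s ∈ Finset.range (n + 1),
      ((((-1 : ℤ) ^ s * (n.choose s : ℤ)) * (s : ℤ)) •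
        nmulD' d x (nmulD' d y Z (m + s - 1)) (n - s)) = 0 := by
    rw [Finset.sum_range_succ (fun s => ((((-1 : ℤ) ^ s * (n.choose s : ℤ)) * ((n - s : ℕ) : ℤ)) •
        nmulD' d x (nmulD' d y Z (m + s)) (n - s - 1))) n]
    rw [Nat.sub_self, Nat.cast_zero, mul_zero, zero_smul, add_zero]
    rw [Finset.sum_range_succ' (fun s => ((((-1 : ℤ) ^ s * (n.choose s : ℤ)) * (s : ℤ)) •
        nmulD' d x (nmulD' d y Z (m + s - 1)) (n - s))) n]
    rw [Nat.cast_zero, mul_zero, zero_smul, add_zero, ← Finset.sum_add_distrib]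
    refine Finset.sum_eq_zero fun s hs => ?_
    rw [Finset.mem_range] at hs
    rw [show m + (s + 1) - 1 = m + s by omega, show n - (s + 1) = n - s - 1 by omega,
      ← add_smul]
    have hnat : (n.choose (s + 1)) * (s + 1) = n.choose s * (n - s) := Nat.choose_succ_right_eq n s
    have hz : ((n.choose (s + 1) : ℤ)) * ((s : ℤ) + 1) = (n.choose s : ℤ) * ((n - s : ℕ) : ℤ) := by
      exact_mod_cast congrArg (Nat.cast : ℕ → ℤ) hnat
    rw [show ((-1 : ℤ) ^ s * (n.choose s : ℤ)) * ((n - s : ℕ) : ℤ) +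
        ((-1 : ℤ) ^ (s + 1) * (n.choose (s + 1) : ℤ)) * ((s + 1 : ℕ) : ℤ) = 0 by
      push_cast
      rw [pow_succ]
      linear_combination (-((-1 : ℤ) ^ s)) * hz, zero_smul]
  rw [e2, add_add_add_comm, e3, add_zero]

lemma claim2 (T : ℕ → ℕ → Polynomial A) (n m : ℕ) :
    ∑ s ∈ Finset.range (n + 1),
      ((((-1 : ℤ) ^ s * (n.choose s : ℤ)) * (-(s : ℤ))) • T (m + s - 1) (n - s)) =
    (n : ℤ) • ∑ s ∈ Finset.range (n - 1 + 1),
      (((-1 : ℤ) ^ s * ((n - 1).choose s : ℤ)) • T (m + s) (n - 1 - s)) := by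
  cases n with
  | zero => simp
  | succ n' =>
    rw [Finset.sum_range_succ' (fun s => ((((-1 : ℤ) ^ s * ((n' + 1).choose s : ℤ)) * (-(s : ℤ))) •
      T (m + s - 1) (n' + 1 - s))) (n' + 1)]
    simp only [Nat.cast_zero, neg_zero, mul_zero, zero_smul, add_zero, Nat.add_sub_cancel]
    rw [Finset.smul_sum]
    refine Finset.sum_congr rfl fun s hs => ?_
    rw [Finset.mem_range] at hs
    rw [show m + (s + 1) - 1 = m + s by omega, show n' + 1 - (s + 1) = n' - s by omega,
      smul_smul]
    congr 1
    have hnat := Nat.add_one_mul_choose_eq n' s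
    have hz : ((n' : ℤ) + 1) * (n'.choose s : ℤ) = ((n' + 1).choose (s + 1) : ℤ) * ((s : ℤ) + 1) := by
      exact_mod_cast congrArg (Nat.cast : ℕ → ℤ) hnat
    push_cast
    rw [pow_succ]
    linear_combination (-((-1 : ℤ) ^ s)) * hz

lemma claim3 (U : ℕ → ℕ → Polynomial A) (n m : ℕ) :
    ∑ s ∈ Finset.range (n + 1),
      ((((-1 : ℤ) ^ s * (n.choose s : ℤ)) * (-((n - s : ℕ) : ℤ))) • U (m + s) (n - s - 1)) =
    (-(n : ℤ)) • ∑ s ∈ Finset.range (n - 1 + 1),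
      (((-1 : ℤ) ^ s * ((n - 1).choose s : ℤ)) • U (m + s) (n - 1 - s)) := by
  cases n with
  | zero => simp
  | succ n' =>
    rw [Finset.sum_range_succ (fun s => ((((-1 : ℤ) ^ s * ((n' + 1).choose s : ℤ)) *
      (-((n' + 1 - s : ℕ) : ℤ))) • U (m + s) (n' + 1 - s - 1))) (n' + 1)]
    rw [Nat.sub_self, Nat.cast_zero, neg_zero, mul_zero, zero_smul, add_zero]
    rw [show n' + 1 - 1 = n' by omega, Finset.smul_sum]
    refine Finset.sum_congr rfl fun s hs => ?_
    rw [Finset.mem_range] at hs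
    rw [show n' + 1 - s - 1 = n' - s by omega, smul_smul]
    congr 1
    have hnat := Nat.choose_mul_succ_eq n' s
    have hz : (n'.choose s : ℤ) * ((n' : ℤ) + 1) =
        ((n' + 1).choose s : ℤ) * ((n' + 1 - s : ℕ) : ℤ) := by
      exact_mod_cast congrArg (Nat.cast : ℕ → ℤ) hnat
    have hsub : ((n' + 1 - s : ℕ) : ℤ) = (n' : ℤ) + 1 - (s : ℤ) := by omega
    rw [hsub] at hz
    push_cast
    rw [hsub]
    linear_combination ((-1 : ℤ) ^ s) * hz

lemma CA_y_step (d : A →ₗ[k] A) (x Y z : Polynomial A)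
    (hIH : ∀ n m : ℕ, nmulD' d (nmulD' d x Y n) z m =
      ∑ s ∈ Finset.range (n + 1), (((-1 : ℤ) ^ s * (n.choose s : ℤ)) •
        nmulD' d x (nmulD' d Y z (m + s)) (n - s))) (n m : ℕ) :
    nmulD' d (nmulD' d x (Polynomial.X * Y) n) z m =
      ∑ s ∈ Finset.range (n + 1), (((-1 : ℤ) ^ s * (n.choose s : ℤ)) •
        nmulD' d x (nmulD' d (Polynomial.X * Y) z (m + s)) (n - s)) := by
  rw [nmulD_X_mul_right d x Y n, nmulD_add_left, nmulD_smul_left, nmulD_X_mul_left,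
    hIH n (m - 1), hIH (n - 1) m]
  have h1 : ∀ s ∈ Finset.range (n + 1),
      (((-1 : ℤ) ^ s * (n.choose s : ℤ)) •
        nmulD' d x (nmulD' d (Polynomial.X * Y) z (m + s)) (n - s)) =
      ((((-1 : ℤ) ^ s * (n.choose s : ℤ)) * (-(m : ℤ))) •
          nmulD' d x (nmulD' d Y z (m - 1 + s)) (n - s) +
        (((-1 : ℤ) ^ s * (n.choose s : ℤ)) * (-(s : ℤ))) •
          nmulD' d x (nmulD' d Y z (m + s - 1)) (n - s)) := by
    intro s _
    rw [nmulD_X_mul_left d Y z (m + s), nmulD_smul_right, smul_smul]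
    rw [show ((-1 : ℤ) ^ s * (n.choose s : ℤ)) * (-((m + s : ℕ) : ℤ)) =
      ((-1 : ℤ) ^ s * (n.choose s : ℤ)) * (-(m : ℤ)) +
      ((-1 : ℤ) ^ s * (n.choose s : ℤ)) * (-(s : ℤ)) by push_cast; ring, add_smul]
    refine congrArg (· + _) ?_
    rcases Nat.eq_zero_or_pos m with hm | hm
    · subst hm; norm_num
    · rw [show m + s - 1 = m - 1 + s by omega]
  rw [Finset.sum_congr rfl h1, Finset.sum_add_distrib]
  congr 1
  · rw [Finset.smul_sum]
    refine Finset.sum_congr rfl fun s _ => ?_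
    rw [smul_smul]
    congr 1
    ring
  · rw [claim2 (fun u v => nmulD' d x (nmulD' d Y z u) v) n m]

lemma CA_x_step (d : A →ₗ[k] A) (XX y z : Polynomial A)
    (hIH : ∀ n m : ℕ, nmulD' d (nmulD' d XX y n) z m =
      ∑ s ∈ Finset.range (n + 1), (((-1 : ℤ) ^ s * (n.choose s : ℤ)) •
        nmulD' d XX (nmulD' d y z (m + s)) (n - s))) (n m : ℕ) :
    nmulD' d (nmulD' d (Polynomial.X * XX) y n) z m =
      ∑ s ∈ Finset.range (n + 1), (((-1 : ℤ) ^ s * (n.choose s : ℤ)) •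
        nmulD' d (Polynomial.X * XX) (nmulD' d y z (m + s)) (n - s)) := by
  rw [nmulD_X_mul_left d XX y n, nmulD_smul_left, hIH (n - 1) m]
  have h1 : ∀ s ∈ Finset.range (n + 1),
      (((-1 : ℤ) ^ s * (n.choose s : ℤ)) •
        nmulD' d (Polynomial.X * XX) (nmulD' d y z (m + s)) (n - s)) =
      ((((-1 : ℤ) ^ s * (n.choose s : ℤ)) * (-((n - s : ℕ) : ℤ))) •
        nmulD' d XX (nmulD' d y z (m + s)) (n - s - 1)) := by
    intro s _
    rw [nmulD_X_mul_left, smul_smul]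
  rw [Finset.sum_congr rfl h1, claim3 (fun u v => nmulD' d XX (nmulD' d y z u) v) n m]

theorem main_thm (d : A →ₗ[k] A)
    (hleib : ∀ a b : A, d (a * b) = d a * b + a * d b) :
    ∀ (x y z : Polynomial A) (n m : ℕ),
      nmulD' d (nmulD' d x y n) z m =
        ∑ s ∈ Finset.range (n + 1),
          (((-1 : ℤ) ^ s * (n.choose s : ℤ)) •
            nmulD' d x (nmulD' d y z (m + s)) (n - s)) := by
  have Hz : ∀ (a b : A) (z : Polynomial A) (n m : ℕ),
      nmulD' d (nmulD' d (Polynomial.C a) (Polynomial.C b) n) z m =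
        ∑ s ∈ Finset.range (n + 1), (((-1 : ℤ) ^ s * (n.choose s : ℤ)) •
          nmulD' d (Polynomial.C a) (nmulD' d (Polynomial.C b) z (m + s)) (n - s)) := by
    intro a b z
    induction z using Polynomial.induction_on' with
    | add p q hp hq =>
      intro n m
      rw [nmulD_add_right, hp n m, hq n m, ← Finset.sum_add_distrib]
      refine Finset.sum_congr rfl fun s _ => ?_
      rw [nmulD_add_right, nmulD_add_right, smul_add]
    | monomial r c =>
      have key : ∀ (r : ℕ) (c : A) (n m : ℕ),
          nmulD' d (nmulD' d (Polynomial.C a) (Polynomial.C b) n)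
            ((Polynomial.X : Polynomial A) ^ r * Polynomial.C c) m =
          ∑ s ∈ Finset.range (n + 1), (((-1 : ℤ) ^ s * (n.choose s : ℤ)) •
            nmulD' d (Polynomial.C a) (nmulD' d (Polynomial.C b)
              ((Polynomial.X : Polynomial A) ^ r * Polynomial.C c) (m + s)) (n - s)) := by
        intro r
        induction r with
        | zero =>
          intro c n m
          rw [pow_zero, one_mul]
          exact CA_base d hleib a b c n m
        | succ r ih =>
          intro c n m
          rw [show (Polynomial.X : Polynomial A) ^ (r + 1) * Polynomial.C c =
            Polynomial.X * ((Polynomial.X : Polynomial A) ^ r * Polynomial.C c) by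
              rw [pow_succ', mul_assoc]]
          exact CA_z_step d (Polynomial.C a) (Polynomial.C b) _ (ih c) n m
      intro n m
      rw [show (Polynomial.monomial r c : Polynomial A) =
        (Polynomial.X : Polynomial A) ^ r * Polynomial.C c by
          rw [← Polynomial.C_mul_X_pow_eq_monomial, Polynomial.X_pow_mul]]
      exact key r c n m
  have Hy : ∀ (a : A) (y z : Polynomial A) (n m : ℕ),
      nmulD' d (nmulD' d (Polynomial.C a) y n) z m =
        ∑ s ∈ Finset.range (n + 1), (((-1 : ℤ) ^ s * (n.choose s : ℤ)) •
          nmulD' d (Polynomial.C a) (nmulD' d y z (m + s)) (n - s)) := by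
    intro a y
    induction y using Polynomial.induction_on' with
    | add p q hp hq =>
      intro z n m
      rw [nmulD_add_right, nmulD_add_left, hp z n m, hq z n m, ← Finset.sum_add_distrib]
      refine Finset.sum_congr rfl fun s _ => ?_
      rw [nmulD_add_left, nmulD_add_right, smul_add]
    | monomial q b =>
      have key : ∀ (q : ℕ) (b : A) (z : Polynomial A) (n m : ℕ),
          nmulD' d (nmulD' d (Polynomial.C a)
            ((Polynomial.X : Polynomial A) ^ q * Polynomial.C b) n) z m =
          ∑ s ∈ Finset.range (n + 1), (((-1 : ℤ) ^ s * (n.choose s : ℤ)) •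
            nmulD' d (Polynomial.C a) (nmulD' d
              ((Polynomial.X : Polynomial A) ^ q * Polynomial.C b) z (m + s)) (n - s)) := by
        intro q
        induction q with
        | zero =>
          intro b z n m
          rw [pow_zero, one_mul]
          exact Hz a b z n m
        | succ q ih =>
          intro b z n m
          rw [show (Polynomial.X : Polynomial A) ^ (q + 1) * Polynomial.C b =
            Polynomial.X * ((Polynomial.X : Polynomial A) ^ q * Polynomial.C b) by
              rw [pow_succ', mul_assoc]]
          exact CA_y_step d (Polynomial.C a) _ z (fun n m => ih b z n m) n m
      intro z n m
      rw [show (Polynomial.monomial q b : Polynomial A) =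
        (Polynomial.X : Polynomial A) ^ q * Polynomial.C b by
          rw [← Polynomial.C_mul_X_pow_eq_monomial, Polynomial.X_pow_mul]]
      exact key q b z n m
  intro x
  induction x using Polynomial.induction_on' with
  | add p q hp hq =>
    intro y z n m
    rw [nmulD_add_left, nmulD_add_left, hp y z n m, hq y z n m, ← Finset.sum_add_distrib]
    refine Finset.sum_congr rfl fun s _ => ?_
    rw [nmulD_add_left, smul_add]
  | monomial p a =>
    have key : ∀ (p : ℕ) (a : A) (y z : Polynomial A) (n m : ℕ),
        nmulD' d (nmulD' d ((Polynomial.X : Polynomial A) ^ p * Polynomial.C a) y n) z m =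
        ∑ s ∈ Finset.range (n + 1), (((-1 : ℤ) ^ s * (n.choose s : ℤ)) •
          nmulD' d ((Polynomial.X : Polynomial A) ^ p * Polynomial.C a)
            (nmulD' d y z (m + s)) (n - s)) := by
      intro p
      induction p with
      | zero =>
        intro a y z n m
        rw [pow_zero, one_mul]
        exact Hy a y z n m
      | succ p ih =>
        intro a y z n m
        rw [show (Polynomial.X : Polynomial A) ^ (p + 1) * Polynomial.C a =
          Polynomial.X * ((Polynomial.X : Polynomial A) ^ p * Polynomial.C a) by
            rw [pow_succ', mul_assoc]]
        exact CA_x_step d _ y z (fun n m => ih a y z n m) n m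
    intro y z n m
    rw [show (Polynomial.monomial p a : Polynomial A) =
      (Polynomial.X : Polynomial A) ^ p * Polynomial.C a by
        rw [← Polynomial.C_mul_X_pow_eq_monomial, Polynomial.X_pow_mul]]
    exact key p a y z n m

variable (k A)

/-- Proposition 2.3.1(i): for an associative algebra `A` with a locally
nilpotent derivation `∂`, the products `a ∘_n b = a·∂^n(b)` on `H ⊗ A`
satisfy the conformal associativity identity
`(a ∘_n b) ∘_m c = Σ_s (-1)^s C(n,s) a ∘_{n-s} (b ∘_{m+s} c)`. -/
theorem diff_conformal_associativity (d : A →ₗ[k] A)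
    (hleib : ∀ a b : A, d (a * b) = d a * b + a * d b)
    (hln : ∀ a : A, ∃ n : ℕ, (⇑d)^[n] a = 0) :
    ∀ (x y z : Polynomial A) (n m : ℕ),
      nmulD k A d (nmulD k A d x y n) z m =
        ∑ s ∈ Finset.range (n + 1),
          (((-1 : ℤ) ^ s * (n.choose s : ℤ)) •
            nmulD k A d x (nmulD k A d y z (m + s)) (n - s)) := by
  have heq : ∀ (x y : Polynomial A) (n : ℕ), nmulD k A d x y n = nmulD' d x y n :=
    fun _ _ _ => rfl
  intro x y z n m
  simp only [heq]
  exact main_thm d hleib x y z n m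

end
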